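/- If p and q are distinct primitive words over an alphabet Σ, then p^i q^j is primitive for all natural numbers i, j ≥ 2. -/

import Mathlib

/-- `wpow v n` is the word `vⁿ`, the `n`-fold concatenation of the word `v` with itself. -/
def wpow {α : Type*} (v : List α) : ℕ → List α
  | 0 => []
  | n + 1 => v ++ wpow v n

/-- A nonempty word `u` is primitive if `u = vⁿ` implies `n = 1`. -/
def Primitive {α : Type*} (u : List α) : Prop :=
  u ≠ [] ∧ ∀ (v : List α) (n : ℕ), u = wpow v n → n = 1

namespace WordProof
open List
variable {α : Type*}

@[simp] theorem wpow_zero (v : List α) : wpow v 0 = [] := rfl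
theorem wpow_succ (v : List α) (n : ℕ) : wpow v (n+1) = v ++ wpow v n := rfl

@[simp] theorem wpow_nil (n : ℕ) : wpow ([] : List α) n = [] := by
  induction n with
  | zero => rfl
  | succ n ih => simp [wpow_succ, ih]

@[simp] theorem length_wpow (v : List α) (n : ℕ) : (wpow v n).length = n * v.length := by
  induction n with
  | zero => simp
  | succ n ih => simp [wpow_succ, ih, Nat.succ_mul]; ring

theorem wpow_add (v : List α) (m n : ℕ) : wpow v (m + n) = wpow v m ++ wpow v n := by
  induction m with
  | zero => simp
  | succ m ih => rw [Nat.succ_add, wpow_succ, wpow_succ, ih, append_assoc]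

theorem wpow_one (v : List α) : wpow v 1 = v := by simp [wpow_succ]
theorem wpow_two (v : List α) : wpow v 2 = v ++ v := by simp [wpow_succ, wpow_one]
theorem wpow_three (v : List α) : wpow v 3 = v ++ (v ++ v) := by
  simp [wpow_succ, wpow_two]

theorem wpow_succ' (v : List α) (n : ℕ) : wpow v (n+1) = wpow v n ++ v := by
  rw [wpow_add, wpow_one]

theorem wpow_mul (v : List α) (m n : ℕ) : wpow (wpow v m) n = wpow v (n * m) := by
  induction n with
  | zero => simp
  | succ n ih => rw [wpow_succ, ih, Nat.succ_mul, Nat.add_comm (n*m) m, wpow_add]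

theorem reverse_wpow (v : List α) (n : ℕ) : (wpow v n).reverse = wpow v.reverse n := by
  induction n with
  | zero => simp
  | succ n ih => rw [wpow_succ, reverse_append, ih, wpow_succ']

theorem wpow_conj (A B : List α) (n : ℕ) :
    A ++ wpow (B ++ A) n = wpow (A ++ B) n ++ A := by
  induction n with
  | zero => simp
  | succ n ih =>
    rw [wpow_succ, wpow_succ]
    calc A ++ ((B ++ A) ++ wpow (B ++ A) n)
        = (A ++ B) ++ (A ++ wpow (B ++ A) n) := by simp [append_assoc]
      _ = (A ++ B) ++ (wpow (A ++ B) n ++ A) := by rw [ih]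
      _ = ((A ++ B) ++ wpow (A ++ B) n) ++ A := by simp [append_assoc]

theorem take_wpow_mul (v : List α) {k n : ℕ} (h : k ≤ n) :
    (wpow v n).take (k * v.length) = wpow v k := by
  have h1 : wpow v n = wpow v k ++ wpow v (n - k) := by
    rw [← wpow_add]; congr 1; omega
  rw [h1, show k * v.length = (wpow v k).length by simp, take_left]

theorem drop_wpow_mul (v : List α) {k n : ℕ} (h : k ≤ n) :
    (wpow v n).drop (k * v.length) = wpow v (n - k) := by
  have h1 : wpow v n = wpow v k ++ wpow v (n - k) := by
    rw [← wpow_add]; congr 1; omega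
  rw [h1, show k * v.length = (wpow v k).length by simp, drop_left]

theorem take_len_wpow (v : List α) {n : ℕ} (h : 1 ≤ n) :
    (wpow v n).take v.length = v := by
  have := take_wpow_mul v h
  rwa [one_mul, wpow_one] at this

/-- Mod-form periodicity. -/
def MPer (w : List α) (p : ℕ) : Prop := ∀ i, i < w.length → w[i]? = w[i % p]?

/-- Shift-form periodicity. -/
def SPer (w : List α) (p : ℕ) : Prop := ∀ i, i + p < w.length → w[i]? = w[i + p]?

theorem MPer.sper {w : List α} {p : ℕ} (h : MPer w p) : SPer w p := by
  intro i hip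
  rw [h i (by omega), h (i + p) hip, Nat.add_mod_right]

theorem SPer.mper {w : List α} {p : ℕ} (h : SPer w p) (hp : 0 < p) : MPer w p := by
  intro i
  induction i using Nat.strong_induction_on with
  | _ i ih =>
    intro hi
    rcases Nat.lt_or_ge i p with h' | h'
    · rw [Nat.mod_eq_of_lt h']
    · obtain ⟨j, rfl⟩ : ∃ j, i = j + p := ⟨i - p, by omega⟩
      rw [← h j hi, Nat.add_mod_right]
      exact ih j (by omega) (by omega)

theorem getElem?_wpow (v : List α) {n i : ℕ} (hi : i < n * v.length) :
    (wpow v n)[i]? = v[i % v.length]? := by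
  induction n generalizing i with
  | zero => omega
  | succ n ih =>
    rw [wpow_succ, getElem?_append]
    split
    · next h => rw [Nat.mod_eq_of_lt h]
    · next h =>
      push_neg at h
      obtain ⟨j, rfl⟩ : ∃ j, i = v.length + j := ⟨i - v.length, by omega⟩
      rw [Nat.add_sub_cancel_left, Nat.add_mod_left]
      exact ih (by simp [Nat.succ_mul] at hi; omega)

theorem mper_wpow (v : List α) (n : ℕ) : MPer (wpow v n) v.length := by
  intro i hi
  simp only [length_wpow] at hi
  rw [getElem?_wpow v hi, getElem?_wpow v (lt_of_le_of_lt (Nat.mod_le i _) hi),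
    Nat.mod_mod_of_dvd _ dvd_rfl]

theorem sper_wpow (v : List α) (n : ℕ) : SPer (wpow v n) v.length :=
  (mper_wpow v n).sper

theorem SPer.take {w : List α} {p : ℕ} (h : SPer w p) (n : ℕ) : SPer (w.take n) p := by
  intro i hip
  simp only [length_take] at hip
  rw [getElem?_take, getElem?_take, if_pos (by omega), if_pos (by omega)]
  exact h i (by omega)

theorem MPer.take {w : List α} {p : ℕ} (h : MPer w p) (n : ℕ) : MPer (w.take n) p := by
  intro i hi
  simp only [length_take] at hi
  have hmle := Nat.mod_le i p
  rw [getElem?_take, getElem?_take, if_pos (by omega), if_pos (by omega)]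
  exact h i (by omega)

theorem sper_middle {A u C w : List α} {p : ℕ} (hw : w = A ++ (u ++ C))
    (h : SPer w p) : SPer u p := by
  have key : ∀ i, i < u.length → u[i]? = w[A.length + i]? := by
    intro i hi
    rw [hw, getElem?_append_right (by omega), Nat.add_sub_cancel_left,
      getElem?_append, if_pos hi]
  intro i hip
  rw [key i (by omega), key (i + p) hip, ← Nat.add_assoc]
  apply h
  have : w.length = A.length + (u.length + C.length) := by simp [hw]
  omega

theorem eq_wpow_of_mper_aux (d : ℕ) (hd : 0 < d) :
    ∀ (k : ℕ) (w : List α), MPer w d → w.length = d * k → w = wpow (w.take d) k := by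
  intro k
  induction k with
  | zero =>
    intro w _ hlen
    rw [Nat.mul_zero, length_eq_zero_iff] at hlen
    simp [hlen]
  | succ k ih =>
    intro w h hlen
    have hms : d * (k+1) = d * k + d := by ring
    rcases Nat.eq_zero_or_pos k with rfl | hk
    · have : w.length = d := by omega
      rw [wpow_one, ← this, take_length]
    · have hdk : d ≤ d * k := Nat.le_mul_of_pos_right d hk
      have hdle : d + d ≤ w.length := by omega
      have hdrop_len : (w.drop d).length = d * k := by simp [hlen]; omega
      have hmp : MPer (w.drop d) d := by
        intro i hi
        rw [hdrop_len] at hi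
        have hmle := Nat.mod_le i d
        rw [getElem?_drop, getElem?_drop]
        rw [h (d + i) (by omega), h (d + i % d) (by omega),
          Nat.add_mod_left, Nat.add_mod_left, Nat.mod_mod_of_dvd _ dvd_rfl]
      have htake : (w.drop d).take d = w.take d := by
        apply ext_getElem?
        intro i
        rcases Nat.lt_or_ge i d with hi | hi
        · rw [getElem?_take, getElem?_take, if_pos hi, if_pos hi, getElem?_drop,
            h (d + i) (by omega), Nat.add_mod_left, Nat.mod_eq_of_lt hi,
            h i (by omega), Nat.mod_eq_of_lt hi]
        · have l1 : ((w.drop d).take d).length ≤ i := by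
            simp only [length_take, length_drop]; omega
          have l2 : (w.take d).length ≤ i := by simp only [length_take]; omega
          rw [getElem?_eq_none l1, getElem?_eq_none l2]
      have hrec := ih (w.drop d) hmp hdrop_len
      rw [htake] at hrec
      conv_lhs => rw [← take_append_drop d w]
      rw [hrec, wpow_succ]

theorem eq_wpow_of_mper {w : List α} {d : ℕ} (hd : 0 < d) (hdvd : d ∣ w.length)
    (h : MPer w d) : w = wpow (w.take d) (w.length / d) := by
  obtain ⟨k, hk⟩ := hdvd
  have : w.length / d = k := by rw [hk]; exact Nat.mul_div_cancel_left k hd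
  rw [this]
  exact eq_wpow_of_mper_aux d hd k w h hk

theorem _root_.Primitive.exp_eq {u t : List α} {k : ℕ} (hu : Primitive u) (h : u = wpow t k) :
    k = 1 := hu.2 t k h

/-- A primitive word has no proper period dividing its length. -/
theorem _root_.Primitive.period_eq {w : List α} {d : ℕ} (hw : Primitive w) (hd : 0 < d)
    (hdvd : d ∣ w.length) (h : MPer w d) : d = w.length := by
  have h1 := eq_wpow_of_mper hd hdvd h
  have h2 := hw.exp_eq h1
  obtain ⟨k, hk⟩ := hdvd
  rw [hk] at h2
  rw [Nat.mul_div_cancel_left k hd] at h2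
  subst h2
  omega

/-- Fine and Wilf (weak form), for `p ≤ q`. -/
theorem finewilf_aux : ∀ (N : ℕ) {w : List α} {p q : ℕ}, p + q ≤ N → 0 < p → p ≤ q →
    p + q ≤ w.length → SPer w p → SPer w q → SPer w (Nat.gcd p q) := by
  intro N
  induction N with
  | zero => intro w p q h hp; omega
  | succ N ih =>
    intro w p q hpq hp hple hlen h1 h2
    rcases eq_or_lt_of_le hple with rfl | hlt
    · rwa [Nat.gcd_self]
    · have hqp : SPer w (q - p) := by
        intro i hi
        rcases Nat.lt_or_ge (i + q) w.length with hc | hc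
        · rw [h2 i hc, h1 (i + (q - p)) (by omega)]
          congr 1
          omega
        · obtain ⟨j, rfl⟩ : ∃ j, i = j + p := ⟨i - p, by omega⟩
          rw [← h1 j (by omega), h2 j (by omega)]
          congr 1
          omega
      have hgcd : Nat.gcd p q = Nat.gcd p (q - p) := by
        conv_lhs => rw [show q = (q - p) + p by omega, Nat.gcd_add_self_right]
      rw [hgcd]
      rcases le_total p (q - p) with hle2 | hle2
      · exact ih (by omega) hp hle2 (by omega) h1 hqp
      · rw [Nat.gcd_comm]
        rcases Nat.eq_zero_or_pos (q - p) with hz | hz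
        · omega
        · exact ih (by omega) hz hle2 (by omega) hqp h1

theorem finewilf {w : List α} {p q : ℕ} (hp : 0 < p) (hq : 0 < q)
    (hlen : p + q ≤ w.length) (h1 : SPer w p) (h2 : SPer w q) :
    SPer w (Nat.gcd p q) := by
  rcases le_total p q with h | h
  · exact finewilf_aux (p + q) le_rfl hp h hlen h1 h2
  · rw [Nat.gcd_comm]
    exact finewilf_aux (q + p) le_rfl hq h (by omega) h2 h1

theorem exists_prim_root : ∀ (n : ℕ) (u : List α), u.length ≤ n → u ≠ [] →
    ∃ t m, Primitive t ∧ 1 ≤ m ∧ u = wpow t m := by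
  intro n
  induction n with
  | zero =>
    intro u hu hne
    rw [Nat.le_zero, length_eq_zero_iff] at hu
    exact absurd hu hne
  | succ n ih =>
    intro u hu hne
    by_cases hprim : Primitive u
    · exact ⟨u, 1, hprim, le_rfl, (wpow_one u).symm⟩
    · rw [Primitive, not_and_or] at hprim
      rcases hprim with h | h
      · exact absurd (not_not.mp h) hne
      · push_neg at h
        obtain ⟨v, m, huv, hm⟩ := h
        have hm0 : m ≠ 0 := by
          rintro rfl
          exact hne (by simpa using huv)
        have hv0 : v ≠ [] := by
          rintro rfl
          exact hne (by simpa using huv)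
        have hvlen : 0 < v.length := length_pos_iff.mpr hv0
        have hlen2 : u.length = m * v.length := by simp [huv]
        have hvlt : v.length ≤ n := by
          have : 2 ≤ m := by omega
          nlinarith
        obtain ⟨t, j, ht, hj, hvt⟩ := ih v hvlt hv0
        exact ⟨t, m * j, ht, Nat.mul_pos (by omega) hj, by rw [huv, hvt, wpow_mul]⟩

theorem _root_.Primitive.reverse {u : List α} (hu : Primitive u) : Primitive u.reverse := by
  constructor
  · simpa using hu.1
  · intro v n h
    apply hu.2 v.reverse n
    rw [← reverse_wpow, ← h, reverse_reverse]

theorem prim_ne_nil {u : List α} (hu : Primitive u) : 0 < u.length :=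
  length_pos_iff.mpr hu.1

/-- If a list is simultaneously a power of two primitive words, they are equal. -/
theorem prim_pow_eq {x y : List α} (hx : Primitive x) (hy : Primitive y) {b m : ℕ}
    (hb : 1 ≤ b) (hm : 1 ≤ m) (heq : wpow y b = wpow x m) : y = x := by
  have hxl : 0 < x.length := prim_ne_nil hx
  have hyl : 0 < y.length := prim_ne_nil hy
  have hL : b * y.length = m * x.length := by
    have := congrArg List.length heq
    simpa using this
  rcases le_or_gt (y.length + x.length) (b * y.length) with hc | hc
  · have s1 : SPer (wpow y b) y.length := sper_wpow y b
    have s2 : SPer (wpow y b) x.length := by rw [heq]; exact sper_wpow x m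
    have hg := finewilf hyl hxl (by simp; omega) s1 s2
    have hg0 : 0 < Nat.gcd y.length x.length := Nat.gcd_pos_of_pos_left _ hyl
    have hmg := hg.mper hg0
    have hty : (wpow y b).take y.length = y := take_len_wpow y hb
    have htx : (wpow y b).take x.length = x := by rw [heq]; exact take_len_wpow x hm
    have hmy := hmg.take y.length
    rw [hty] at hmy
    have hmx := hmg.take x.length
    rw [htx] at hmx
    have hgy : Nat.gcd y.length x.length = y.length :=
      hy.period_eq hg0 (Nat.gcd_dvd_left _ _) hmy
    have hgx : Nat.gcd y.length x.length = x.length :=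
      hx.period_eq hg0 (Nat.gcd_dvd_right _ _) hmx
    rw [← hty, ← htx, hgy.symm.trans hgx]
  · rcases eq_or_lt_of_le hb with rfl | hb2
    · rw [wpow_one] at heq
      have := hy.exp_eq heq
      subst this
      rw [heq, wpow_one]
    · have h2y : 2 * y.length ≤ b * y.length := Nat.mul_le_mul_right _ hb2
      have hyx : y.length < x.length := by omega
      have hm1 : m = 1 := by
        by_contra hm1
        have : 2 * x.length ≤ m * x.length := Nat.mul_le_mul_right _ (by omega)
        omega
      subst hm1
      rw [wpow_one] at heq
      have := hx.exp_eq heq.symm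
      omega

section Shift
variable {β : Type*} (F : ℕ → β)

theorem shift_iterate {p : ℕ} (hF : ∀ m, F (m + p) = F m) :
    ∀ (q m : ℕ), F (m + q * p) = F m := by
  intro q
  induction q with
  | zero => simp
  | succ q ih =>
    intro m
    have h1 : m + (q + 1) * p = (m + q * p) + p := by ring
    rw [h1, hF (m + q * p)]
    exact ih m

theorem shift_cover {p η : ℕ} (hp : 0 < p) (hF : ∀ m, F (m + p) = F m)
    (hwin : ∀ k, k < p → F (η + k) = F (η + k + η)) : ∀ m, F (m + η) = F m := by
  have hA : ∀ j, F (η + j) = F (η + j + η) := by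
    intro j
    have hd := Nat.div_add_mod j p
    have hc : j / p * p = p * (j / p) := Nat.mul_comm _ _
    have hr : j % p < p := Nat.mod_lt _ hp
    calc F (η + j) = F ((η + j % p) + (j / p) * p) := by congr 1; omega
      _ = F (η + j % p) := shift_iterate F hF _ _
      _ = F (η + j % p + η) := hwin _ hr
      _ = F ((η + j % p + η) + (j / p) * p) := (shift_iterate F hF _ _).symm
      _ = F (η + j + η) := by congr 1; omega
  intro m
  obtain ⟨p', rfl⟩ : ∃ p', p = p' + 1 := ⟨p - 1, by omega⟩
  have e1 : F (m + η * (p' + 1)) = F m := shift_iterate F hF η m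
  have e3 : F ((m + η) + η * (p' + 1)) = F (m + η) := shift_iterate F hF η (m + η)
  have e2 := hA (m + η * p')
  have i1 : η + (m + η * p') = m + η * (p' + 1) := by ring
  have i2 : η + (m + η * p') + η = (m + η) + η * (p' + 1) := by ring
  rw [i2] at e2
  rw [i1] at e2
  exact (e3.symm.trans e2.symm).trans e1

theorem shift_gcd : ∀ (p : ℕ), 0 < p → ∀ (q : ℕ), 0 < q → (∀ m, F (m + p) = F m) →
    (∀ m, F (m + q) = F m) → ∀ m, F (m + Nat.gcd p q) = F m := by
  intro p
  induction p using Nat.strong_induction_on with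
  | _ p ih =>
    intro hp q hq hFp hFq
    have hmod : ∀ m, F (m + q % p) = F m := by
      intro m
      have hd : p * (q / p) + q % p = q := Nat.div_add_mod q p
      have h1 := shift_iterate F hFp (q / p) (m + q % p)
      have h2 : m + q % p + q / p * p = m + q := by
        have : q / p * p = p * (q / p) := Nat.mul_comm _ _
        omega
      rw [h2] at h1
      rw [← h1, hFq]
    rcases Nat.eq_zero_or_pos (q % p) with hz | hz
    · have hg : Nat.gcd p q = p := Nat.gcd_eq_left (Nat.dvd_of_mod_eq_zero hz)
      rw [hg]
      exact hFp
    · have hrec := ih (q % p) (Nat.mod_lt _ hp) hz p hp hmod hFp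
      intro m
      rw [Nat.gcd_rec p q]
      exact hrec m

end Shift

theorem pow_pow_common {y z : List α} {b c : ℕ} (hb : 2 ≤ b) (hc : 2 ≤ c)
    (heq : wpow y b = wpow z c) : ∃ t i j, y = wpow t i ∧ z = wpow t j := by
  have hL : b * y.length = c * z.length := by
    have := congrArg List.length heq
    simpa using this
  by_cases hy0 : y = []
  · subst hy0
    have : z = [] := by
      have : c * z.length = 0 := by simpa using hL.symm
      have : z.length = 0 := by
        rcases Nat.mul_eq_zero.mp this with h | h
        · omega
        · exact h
      exact length_eq_zero_iff.mp this
    subst this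
    exact ⟨[], 1, 1, by simp, by simp⟩
  by_cases hz0 : z = []
  · subst hz0
    have : y = [] := by
      have h0 : b * y.length = 0 := by simpa using hL
      have : y.length = 0 := by
        rcases Nat.mul_eq_zero.mp h0 with h | h
        · omega
        · exact h
      exact length_eq_zero_iff.mp this
    exact absurd this hy0
  · have hyl : 0 < y.length := length_pos_iff.mpr hy0
    have hzl : 0 < z.length := length_pos_iff.mpr hz0
    have hkey : y.length + z.length ≤ b * y.length := by
      have h1 : 2 * z.length ≤ c * z.length := Nat.mul_le_mul_right _ hc
      have h2 : b * y.length ≤ (2 * (b - 1)) * y.length :=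
        Nat.mul_le_mul_right _ (by omega)
      have h3 : (2 * (b - 1)) * y.length = 2 * ((b - 1) * y.length) := by ring
      have h4 : 2 * y.length ≤ b * y.length := Nat.mul_le_mul_right _ hb
      have h5 : (b - 1) * y.length + y.length = b * y.length := by
        have : (b - 1) + 1 = b := by omega
        calc (b - 1) * y.length + y.length = ((b - 1) + 1) * y.length := by ring
          _ = b * y.length := by rw [this]
      omega
    have s1 : SPer (wpow y b) y.length := sper_wpow y b
    have s2 : SPer (wpow y b) z.length := by rw [heq]; exact sper_wpow z c
    have hg := finewilf hyl hzl (by simp; omega) s1 s2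
    obtain ⟨G, hG⟩ : ∃ G, G = Nat.gcd y.length z.length := ⟨_, rfl⟩
    have hGdy : G ∣ y.length := hG ▸ Nat.gcd_dvd_left _ _
    have hGdz : G ∣ z.length := hG ▸ Nat.gcd_dvd_right _ _
    have hg0 : 0 < G := hG ▸ Nat.gcd_pos_of_pos_left _ hyl
    have hmg : MPer (wpow y b) G := by rw [hG]; exact hg.mper (hG ▸ hg0)
    have hty : (wpow y b).take y.length = y := take_len_wpow y (by omega)
    have htz : (wpow y b).take z.length = z := by rw [heq]; exact take_len_wpow z (by omega)
    have hmy := hmg.take y.length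
    rw [hty] at hmy
    have hmz := hmg.take z.length
    rw [htz] at hmz
    have hypow := eq_wpow_of_mper hg0 hGdy hmy
    have hzpow := eq_wpow_of_mper hg0 hGdz hmz
    have e1 : y.take G = (wpow y b).take G := by
      conv_lhs => rw [← hty]
      rw [take_take, min_eq_left (Nat.le_of_dvd hyl hGdy)]
    have e2 : z.take G = (wpow y b).take G := by
      conv_lhs => rw [← htz]
      rw [take_take, min_eq_left (Nat.le_of_dvd hzl hGdz)]
    exact ⟨y.take G, _, _, hypow, by rw [e1, ← e2]; exact hzpow⟩

theorem length_eq_of_wpoweq {x y z : List α} {a b c : ℕ}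
    (heq : wpow x a ++ wpow y b = wpow z c) :
    a * x.length + b * y.length = c * z.length := by
  have := congrArg List.length heq
  simpa using this

/-- Case 1 of the main argument: `x^a` is so long compared to `z` that Fine–Wilf applies. -/
theorem case1 {x y z : List α} {a b c : ℕ} (hx : Primitive x) (hy : Primitive y)
    (hz : Primitive z) (ha : 2 ≤ a) (hb : 2 ≤ b) (hc : 2 ≤ c)
    (heq : wpow x a ++ wpow y b = wpow z c)
    (h1 : x.length + z.length ≤ a * x.length) : x = y := by
  have hxl := prim_ne_nil hx
  have hyl := prim_ne_nil hy
  have hzl := prim_ne_nil hz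
  have hL := length_eq_of_wpoweq heq
  have hv1 : wpow x a = (wpow z c).take (a * x.length) := by
    rw [← heq, show a * x.length = (wpow x a).length by simp, take_left]
  have s1 : SPer (wpow x a) x.length := sper_wpow x a
  have s2 : SPer (wpow x a) z.length := by rw [hv1]; exact (sper_wpow z c).take _
  have hg := finewilf hxl hzl (by simp; omega) s1 s2
  have hg0 : 0 < Nat.gcd x.length z.length := Nat.gcd_pos_of_pos_left _ hxl
  have hmg := hg.mper hg0
  have htx : (wpow x a).take x.length = x := take_len_wpow x (by omega)
  have hmx := hmg.take x.length
  rw [htx] at hmx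
  have hgx : Nat.gcd x.length z.length = x.length :=
    hx.period_eq hg0 (Nat.gcd_dvd_left _ _) hmx
  have hdvd : x.length ∣ z.length := hgx ▸ Nat.gcd_dvd_right _ _
  have hxlez : x.length ≤ z.length := Nat.le_of_dvd hzl hdvd
  have hzx : z = (wpow x a).take z.length := by
    rw [hv1, take_take, min_eq_left (by omega)]
    exact (take_len_wpow z (by omega)).symm
  have hmz := hmg.take z.length
  rw [← hzx, hgx] at hmz
  have hzpow := eq_wpow_of_mper hxl hdvd hmz
  have htzx : z.take x.length = x := by
    rw [hzx, take_take, min_eq_left hxlez, htx]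
  rw [htzx] at hzpow
  have hexp := hz.exp_eq hzpow
  have hzx2 : z = x := by rw [hzpow, hexp, wpow_one]
  rw [hzx2] at heq hL
  have hby : 0 < b * y.length := Nat.mul_pos (by omega) hyl
  have hac : a < c := by
    have : a * x.length < c * x.length := by omega
    exact Nat.lt_of_mul_lt_mul_right (by rwa [Nat.mul_comm a _, Nat.mul_comm c _] at this)
  have hyb : wpow y b = wpow x (c - a) := by
    have h3 : wpow x c = wpow x a ++ wpow x (c - a) := by
      rw [← wpow_add]
      congr 1
      omega
    rw [h3] at heq
    exact append_cancel_left heq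
  exact (prim_pow_eq hx hy (by omega) (by omega) hyb).symm

/-- The crucial small case: `x² y² = z³` with tight length constraints is impossible. -/
theorem c322 {x y z : List α} (hx : Primitive x)
    (heq : wpow x 2 ++ wpow y 2 = wpow z 3)
    (hxz : x.length < z.length) (hzx : z.length < 2 * x.length)
    (hyz : y.length < z.length) (hyx : y.length ≤ x.length) : False := by
  have hxl := prim_ne_nil hx
  have hL : 2 * x.length + 2 * y.length = 3 * z.length := length_eq_of_wpoweq heq
  obtain ⟨e, he⟩ : ∃ e, 2 * x.length = z.length + e :=
    ⟨2 * x.length - z.length, by omega⟩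
  obtain ⟨σ, hσ⟩ : ∃ σ, z.length = x.length + σ := ⟨z.length - x.length, by omega⟩
  obtain ⟨η, hη⟩ : ∃ η, z.length = y.length + η := ⟨z.length - y.length, by omega⟩
  have hyl : 0 < y.length := by omega
  have he2η : e = 2 * η := by omega
  have hee : e < x.length := by omega
  have he0 : 0 < e := by omega
  have hσ0 : 0 < σ := by omega
  have hη0 : 0 < η := by omega
  have hσε : σ ≤ η := by omega
  obtain ⟨f, hf⟩ : ∃ f, z.length = e + f := ⟨z.length - e, by omega⟩
  have hf2σ : f = 2 * σ := by omega
  have hfy : f < y.length := by omega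
  -- decompositions
  have hXa : wpow x 2 = z ++ z.take e := by
    have h1' : wpow x 2 = (wpow z 3).take (2 * x.length) := by
      rw [← heq, show 2 * x.length = (wpow x 2).length by simp, take_left]
    rw [h1', wpow_three, he]
    rw [take_length_add_append, take_append_of_le_length (by omega)]
  have hYb : wpow y 2 = z.drop e ++ z := by
    have h1' : wpow y 2 = (wpow z 3).drop (2 * x.length) := by
      rw [← heq, show 2 * x.length = (wpow x 2).length by simp, drop_left]
    rw [h1', wpow_three, he, drop_length_add_append, drop_append_of_le_length (by omega)]
  have hu_x : z.take e = x.take e := by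
    have hzt : z = (wpow x 2).take z.length := by
      have h0 : (wpow z 3).take z.length = z := take_len_wpow z (by omega)
      rw [← heq, take_append_of_le_length (by simp; omega)] at h0
      exact h0.symm
    rw [hzt, take_take, min_eq_left (by omega), wpow_two,
      take_append_of_le_length (by omega)]
  have hu_border : x.drop σ = z.take e := by
    have h1' : (wpow x 2).drop z.length = z.take e := by
      rw [hXa, drop_left]
    rw [wpow_two, hσ, drop_length_add_append] at h1'
    rw [← h1']
  -- x has shift-period σ
  have hxper : SPer x σ := by
    intro i hip
    have hiu : i < e := by omega
    have e1 : x[i]? = (x.take e)[i]? := by rw [getElem?_take, if_pos hiu]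
    rw [e1, ← hu_x, ← hu_border, getElem?_drop]
    congr 1
    omega
  have hmxσ : MPer x σ := hxper.mper hσ0
  -- relation (1) : for k < η, y[k]? = x[η + k]?
  have hE1 : y.drop f ++ y = z := by
    have h1' := congrArg (List.drop f) hYb
    rw [wpow_two, drop_append_of_le_length (show f ≤ y.length by omega)] at h1'
    have h2' : (z.drop e ++ z).drop f = z := by
      have hlen : (z.drop e).length = f := by simp; omega
      rw [← hlen, drop_left]
    rw [h2'] at h1'
    exact h1'
  have hrel1 : ∀ k, k < η → y[k]? = x[η + k]? := by
    intro k hk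
    have i1 : (y.drop f ++ y)[η + k]? = y[k]? := by
      rw [getElem?_append_right (by simp; omega)]
      congr 1
      simp
      omega
    have i2 : z[η + k]? = x[η + k]? := by
      have j1 : z[η + k]? = (z.take e)[η + k]? := by
        rw [getElem?_take, if_pos (by omega)]
      rw [j1, hu_x, getElem?_take, if_pos (by omega)]
    rw [← i2, ← hE1, i1]
  -- relation (3a) : for k < σ, y[k]? = x[e + k]?
  have hgf : z.drop e = y.take f := by
    have h1' := congrArg (List.take f) hYb
    rw [wpow_two, take_append_of_le_length (show f ≤ y.length by omega)] at h1'
    have h2' : (z.drop e ++ z).take f = z.drop e := by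
      have hlen : (z.drop e).length = f := by simp; omega
      rw [← hlen, take_left]
    rw [h2'] at h1'
    exact h1'.symm
  have hE2 : x.drop e ++ x = z.drop e ++ z.take e := by
    have h1' := congrArg (List.drop e) hXa
    rw [wpow_two, drop_append_of_le_length (show e ≤ x.length by omega),
      drop_append_of_le_length (show e ≤ z.length by omega)] at h1'
    exact h1'
  have hrel3 : ∀ k, k < σ → y[k]? = x[e + k]? := by
    intro k hk
    have i0 : y[k]? = (z.drop e)[k]? := by
      rw [hgf, getElem?_take, if_pos (by omega)]
    have i1 : (z.drop e ++ z.take e)[k]? = (z.drop e)[k]? := by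
      rw [getElem?_append, if_pos (by simp; omega)]
    have i2 : (x.drop e ++ x)[k]? = x[e + k]? := by
      rw [getElem?_append, if_pos (by simp; omega), getElem?_drop]
    rw [i0, ← i1, ← hE2, i2]
  -- combine: shift invariance
  have hwin : ∀ k, k < σ → x[(η + k) % σ]? = x[(η + k + η) % σ]? := by
    intro k hk
    have b1 : η + k < x.length := by omega
    have b2 : η + k + η < x.length := by omega
    rw [← hmxσ _ b1, ← hmxσ _ b2, ← hrel1 k (by omega), show η + k + η = e + k by omega,
      ← hrel3 k hk]
  obtain ⟨F, hFdef⟩ : ∃ F : ℕ → Option α, F = fun i => x[i % σ]? := ⟨_, rfl⟩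
  have hFat : ∀ i, F i = x[i % σ]? := by intro i; rw [hFdef]
  have hFσ : ∀ m, F (m + σ) = F m := by
    intro m
    rw [hFat, hFat, Nat.add_mod_right]
  have hwin' : ∀ k, k < σ → F (η + k) = F (η + k + η) := by
    intro k hk
    rw [hFat, hFat]
    exact hwin k hk
  have hcover := shift_cover F hσ0 hFσ hwin'
  have hgcd := shift_gcd F σ hσ0 η hη0 hFσ hcover
  obtain ⟨δ, hδdef⟩ : ∃ δ, δ = Nat.gcd σ η := ⟨_, rfl⟩
  have hδσ : δ ∣ σ := hδdef ▸ Nat.gcd_dvd_left _ _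
  have hδη : δ ∣ η := hδdef ▸ Nat.gcd_dvd_right _ _
  have hδ0 : 0 < δ := hδdef ▸ Nat.gcd_pos_of_pos_left _ hσ0
  have hδle : δ ≤ σ := Nat.le_of_dvd hσ0 hδσ
  have hgcd' : ∀ m, F (m + δ) = F m := by
    rw [hδdef]
    exact hgcd
  have hmxδ : MPer x δ := by
    intro i hi
    have s2 := shift_iterate F hgcd' (i / δ) (i % δ)
    rw [Nat.mod_add_div' i δ] at s2
    have hlt : i % δ < δ := Nat.mod_lt _ hδ0
    calc x[i]? = x[i % σ]? := hmxσ i hi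
      _ = F i := (hFat i).symm
      _ = F (i % δ) := s2
      _ = x[i % δ % σ]? := hFat _
      _ = x[i % δ]? := by rw [Nat.mod_eq_of_lt (show i % δ < σ by omega)]
  have hδdvd : δ ∣ x.length := by
    have hxlen : x.length = 2 * η + σ := by omega
    rw [hxlen]
    exact dvd_add (Dvd.dvd.mul_left hδη 2) hδσ
  have := hx.period_eq hδ0 hδdvd hmxδ
  omega

/-- The hard case: both powers short relative to `z`, derive a contradiction. -/
theorem hard_false {NN : ℕ}
    (IH : ∀ {x' y' z' : List α} {a' b' c' : ℕ}, 2 ≤ a' → 2 ≤ b' → 2 ≤ c' →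
      wpow x' a' ++ wpow y' b' = wpow z' c' → c' * z'.length < NN →
      ∃ t i j k, x' = wpow t i ∧ y' = wpow t j ∧ z' = wpow t k)
    {x y z : List α} {a b c : ℕ} (hx : Primitive x) (hy : Primitive y) (hz : Primitive z)
    (ha : 2 ≤ a) (hb : 2 ≤ b) (hc : 2 ≤ c)
    (heq : wpow x a ++ wpow y b = wpow z c)
    (hNN : c * z.length ≤ NN)
    (h1 : a * x.length < x.length + z.length)
    (h2 : b * y.length < y.length + z.length)
    (hba : b * y.length ≤ a * x.length) : False := by
  have hxl := prim_ne_nil hx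
  have hyl := prim_ne_nil hy
  have hzl := prim_ne_nil hz
  have hL := length_eq_of_wpoweq heq
  have h2x : 2 * x.length ≤ a * x.length := Nat.mul_le_mul_right _ ha
  have h2y : 2 * y.length ≤ b * y.length := Nat.mul_le_mul_right _ hb
  have h2z : 2 * z.length ≤ c * z.length := Nat.mul_le_mul_right _ hc
  have hby0 : 0 < b * y.length := Nat.mul_pos (by omega) hyl
  have hxz : x.length < z.length := by omega
  have hzlea : z.length ≤ a * x.length := by omega
  -- exclude z.length = a * x.length
  have hzlta : z.length < a * x.length := by
    rcases eq_or_lt_of_le hzlea with he' | h'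
    · exfalso
      have hzeq : z = wpow x a := by
        have h0 : (wpow z c).take z.length = z := take_len_wpow z (by omega)
        rw [← heq] at h0
        rw [he', show a * x.length = (wpow x a).length by simp, take_left] at h0
        exact h0.symm
      have := hz.exp_eq hzeq
      omega
    · exact h'
  obtain ⟨e, he⟩ : ∃ e, a * x.length = z.length + e := ⟨a * x.length - z.length, by omega⟩
  have he0 : 0 < e := by omega
  have hee : e < x.length := by omega
  have hc4 : c < 4 := by
    have : c * z.length < 4 * z.length := by omega
    exact Nat.lt_of_mul_lt_mul_right (by rwa [Nat.mul_comm c _, Nat.mul_comm 4 _] at this)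
  -- z as a prefix of wpow x a, and the common prefix u
  have hzt : z = (wpow x a).take z.length := by
    have h0 : (wpow z c).take z.length = z := take_len_wpow z (by omega)
    rw [← heq, take_append_of_le_length (by simp; omega)] at h0
    exact h0.symm
  have hu_x : z.take e = x.take e := by
    rw [hzt, take_take, min_eq_left (by omega)]
    conv_lhs => rw [show a = (a - 1) + 1 by omega, wpow_succ]
    rw [take_append_of_le_length (by omega)]
  interval_cases c
  -- ================= c = 2 =================
  · have hXa : wpow x a = z ++ z.take e := by
      have h1' : wpow x a = (wpow z 2).take (a * x.length) := by
        rw [← heq, show a * x.length = (wpow x a).length by simp, take_left]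
      rw [h1', wpow_two, he, take_length_add_append]
    have hYb : wpow y b = z.drop e := by
      have h1' : wpow y b = (wpow z 2).drop (a * x.length) := by
        rw [← heq, show a * x.length = (wpow x a).length by simp, drop_left]
      rw [h1', wpow_two, he, drop_length_add_append]
    -- drop e (wpow x a) two ways
    have hdropXa : x.drop e ++ wpow x (a - 1) = wpow y b ++ z.take e := by
      have l1 : (wpow x a).drop e = x.drop e ++ wpow x (a - 1) := by
        conv_lhs => rw [show a = (a - 1) + 1 by omega, wpow_succ]
        rw [drop_append_of_le_length (by omega)]
      have l2 : (wpow x a).drop e = wpow y b ++ z.take e := by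
        rw [hXa, drop_append_of_le_length (by omega), hYb]
      rw [← l1, l2]
    -- key equation
    have hkey : wpow (x.drop e ++ x.take e) a = wpow y b ++ (x.take e ++ x.take e) := by
      have hxsplit : x.take e ++ x.drop e = x := take_append_drop e x
      calc wpow (x.drop e ++ x.take e) a
          = (x.drop e ++ x.take e) ++ wpow (x.drop e ++ x.take e) (a - 1) := by
            conv_lhs => rw [show a = (a - 1) + 1 by omega, wpow_succ]
        _ = x.drop e ++ (x.take e ++ wpow (x.drop e ++ x.take e) (a - 1)) := by
            rw [append_assoc]
        _ = x.drop e ++ (wpow (x.take e ++ x.drop e) (a - 1) ++ x.take e) := by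
            rw [wpow_conj]
        _ = (x.drop e ++ wpow x (a - 1)) ++ x.take e := by
            rw [hxsplit, append_assoc]
        _ = (wpow y b ++ z.take e) ++ x.take e := by rw [hdropXa]
        _ = wpow y b ++ (x.take e ++ x.take e) := by rw [hu_x, append_assoc]
    -- reverse and apply IH
    have hulen : (x.take e).length = e := by rw [length_take]; omega
    have hrev : wpow (x.take e).reverse 2 ++ wpow y.reverse b
        = wpow ((x.take e).reverse ++ (x.drop e).reverse) a := by
      have h0 := congrArg List.reverse hkey
      simp only [reverse_append, reverse_wpow, wpow_two, append_assoc] at h0 ⊢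
      exact h0.symm
    have hzplen : ((x.take e).reverse ++ (x.drop e).reverse).length = x.length := by
      rw [length_append, length_reverse, length_reverse, hulen, length_drop]
      omega
    have hlt : a * ((x.take e).reverse ++ (x.drop e).reverse).length < NN := by
      rw [hzplen]
      omega
    obtain ⟨t, i, j, k, hti, _, htk⟩ := IH (le_refl 2) hb ha hrev hlt
    have hut : x.take e = wpow t.reverse i := by
      rw [← reverse_reverse (x.take e), hti, reverse_wpow]
    have hdut : x.drop e ++ x.take e = wpow t.reverse k := by
      calc x.drop e ++ x.take e
          = ((x.take e).reverse ++ (x.drop e).reverse).reverse := by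
            rw [reverse_append, reverse_reverse, reverse_reverse]
        _ = (wpow t k).reverse := by rw [htk]
        _ = wpow t.reverse k := reverse_wpow t k
    have hilen : i * t.reverse.length = e := by
      have h0 := congrArg List.length hut
      rw [length_wpow, hulen] at h0
      omega
    have hklen : k * t.reverse.length = x.length := by
      have h0 := congrArg List.length hdut
      rw [length_wpow, length_append, length_drop, hulen] at h0
      omega
    have htlen : 0 < t.reverse.length := by
      by_contra h0
      have h0' : t.reverse.length = 0 := by omega
      rw [h0', Nat.mul_zero] at hilen
      omega
    have hti1 : 1 ≤ i := by
      by_contra h0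
      have h0' : i = 0 := by omega
      rw [h0', Nat.zero_mul] at hilen
      omega
    have hki : i < k := by
      by_contra h0
      push_neg at h0
      have := Nat.mul_le_mul_right t.reverse.length h0
      omega
    have hd : x.drop e = wpow t.reverse (k - i) := by
      have hsplit : wpow t.reverse k = wpow t.reverse (k - i) ++ wpow t.reverse i := by
        rw [← wpow_add]
        congr 1
        omega
      rw [hsplit, ← hut] at hdut
      exact append_cancel_right hdut
    have hxpow : x = wpow t.reverse k := by
      conv_lhs => rw [← take_append_drop e x]
      rw [hut, hd, ← wpow_add]
      congr 1
      omega
    have := hx.exp_eq hxpow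
    omega
  -- ================= c = 3 =================
  · have ha2 : a = 2 := by
      by_contra hne2
      have ha3 : 3 ≤ a := by omega
      have h3x : 3 * x.length ≤ a * x.length := Nat.mul_le_mul_right _ ha3
      omega
    subst ha2
    obtain ⟨σ, hσ⟩ : ∃ σ, x.length = e + σ := ⟨x.length - e, by omega⟩
    obtain ⟨f, hf⟩ : ∃ f, z.length = e + f := ⟨z.length - e, by omega⟩
    have hσ0 : 0 < σ := by omega
    have hf2σ : f = 2 * σ := by omega
    have hf0 : 0 < f := by omega
    have hfy : f < y.length := by omega
    obtain ⟨η, hη⟩ : ∃ η, y.length = η + f := ⟨y.length - f, by omega⟩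
    have hη0 : 0 < η := by omega
    have hbyl : b * y.length = z.length + f := by omega
    have hXa : wpow x 2 = z ++ z.take e := by
      have h1' : wpow x 2 = (wpow z 3).take (2 * x.length) := by
        rw [← heq, show 2 * x.length = (wpow x 2).length by simp, take_left]
      rw [h1', wpow_three, he, take_length_add_append, take_append_of_le_length (by omega)]
    have hYb : wpow y b = z.drop e ++ z := by
      have h1' : wpow y b = (wpow z 3).drop (2 * x.length) := by
        rw [← heq, show 2 * x.length = (wpow x 2).length by simp, drop_left]
      rw [h1', wpow_three, he, drop_length_add_append, drop_append_of_le_length (by omega)]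
    have hu_border : x.drop σ = z.take e := by
      have h1' : (wpow x 2).drop z.length = z.take e := by rw [hXa, drop_left]
      rw [wpow_two, show z.length = x.length + σ by omega, drop_length_add_append] at h1'
      rw [← h1']
    have hxper : SPer x σ := by
      intro i hip
      have hiu : i < e := by omega
      have e1 : x[i]? = (x.take e)[i]? := by rw [getElem?_take, if_pos hiu]
      rw [e1, ← hu_x, ← hu_border, getElem?_drop]
      congr 1
      omega
    have hglen : (z.drop e).length = f := by simp; omega
    have hgf : z.drop e = y.take f := by
      have h1' := congrArg (List.take f) hYb
      rw [show b = (b - 1) + 1 by omega, wpow_succ,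
        take_append_of_le_length (show f ≤ y.length by omega)] at h1'
      have h2' : (z.drop e ++ z).take f = z.drop e := by
        rw [← hglen, take_left]
      rw [h2'] at h1'
      exact h1'.symm
    -- branch on Fine–Wilf applicability for u = z.take e
    rcases le_or_gt (σ + y.length) e with hFWu | hsmall
    · -- u has periods σ and |y|; Fine–Wilf kills x
      have hulen : (z.take e).length = e := by simp; omega
      have hsu : SPer (z.take e) σ := by
        rw [hu_x]
        exact hxper.take e
      have hsuy : SPer (z.take e) y.length := by
        apply sper_middle (A := z.drop e) (C := z.drop e) ?_ (sper_wpow y b)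
        rw [hYb]
        congr 1
        exact (take_append_drop e z).symm
      have hδ' := finewilf hσ0 hyl (by rw [hulen]; omega) hsu hsuy
      obtain ⟨δ, hδdef⟩ : ∃ δ, δ = Nat.gcd σ y.length := ⟨_, rfl⟩
      have hδσ : δ ∣ σ := hδdef ▸ Nat.gcd_dvd_left _ _
      have hδy : δ ∣ y.length := hδdef ▸ Nat.gcd_dvd_right _ _
      have hδ0 : 0 < δ := hδdef ▸ Nat.gcd_pos_of_pos_left _ hσ0
      have hδle : δ ≤ σ := Nat.le_of_dvd hσ0 hδσ
      have hmu : MPer (z.take e) δ := by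
        rw [hδdef]
        exact hδ'.mper (hδdef ▸ hδ0)
      have hmxσ : MPer x σ := hxper.mper hσ0
      have hmx : MPer x δ := by
        intro i hi
        have hiσ : i % σ < σ := Nat.mod_lt _ hσ0
        have hiδ : i % δ < δ := Nat.mod_lt _ hδ0
        calc x[i]? = x[i % σ]? := hmxσ i hi
          _ = (z.take e)[i % σ]? := by
              rw [hu_x, getElem?_take, if_pos (by omega)]
          _ = (z.take e)[i % σ % δ]? := hmu _ (by omega)
          _ = (z.take e)[i % δ]? := by rw [Nat.mod_mod_of_dvd _ hδσ]
          _ = x[i % δ]? := by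
              rw [hu_x, getElem?_take, if_pos (by omega)]
      have hδe : δ ∣ e := by
        have hδf : δ ∣ f := by
          rw [hf2σ]
          exact Dvd.dvd.mul_left hδσ 2
        have hδB : δ ∣ b * y.length := Dvd.dvd.mul_left hδy b
        have he2 : e = b * y.length - 2 * f := by omega
        rw [he2]
        exact Nat.dvd_sub hδB (Dvd.dvd.mul_left hδf 2)
      have hδx : δ ∣ x.length := by
        rw [show x.length = e + σ by omega]
        exact dvd_add hδe hδσ
      have := hx.period_eq hδ0 hδx hmx
      omega
    · -- e < σ + |y| : then b ≤ 3
      have hb4 : b < 4 := by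
        by_contra h0
        have h4y : 4 * y.length ≤ b * y.length := Nat.mul_le_mul_right _ (by omega)
        omega
      interval_cases b
      -- ---- b = 2 : the x²y² = z³ case
      · rcases le_total y.length x.length with hyx | hxy
        · exact c322 hx heq hxz (by omega) (by omega) hyx
        · have heqr : wpow y.reverse 2 ++ wpow x.reverse 2 = wpow z.reverse 3 := by
            have h0 := congrArg List.reverse heq
            rw [reverse_append, reverse_wpow, reverse_wpow, reverse_wpow] at h0
            exact h0
          apply c322 hy.reverse heqr
          · simp; omega
          · simp; omega
          · simp; omega
          · simp; omega
      -- ---- b = 3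
      · have he3 : e = 3 * η + 2 * σ := by omega
        have hE : y.drop f ++ (y ++ y) = z.take e ++ z.drop e := by
          have h1' := congrArg (List.drop f) hYb
          rw [wpow_three, drop_append_of_le_length (show f ≤ y.length by omega)] at h1'
          have h2' : (z.drop e ++ z).drop f = z := by
            rw [← hglen, drop_left]
          rw [h2'] at h1'
          rw [h1']
          exact (take_append_drop e z).symm
        have hrelyu : ∀ i, i < y.length → y[i]? = (z.take e)[η + i]? := by
          intro i hi
          have i1 : (y.drop f ++ (y ++ y))[η + i]? = y[i]? := by
            rw [getElem?_append_right (by simp; omega)]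
            rw [show η + i - (y.drop f).length = i by simp; omega]
            rw [getElem?_append, if_pos hi]
          have i2 : (z.take e ++ z.drop e)[η + i]? = (z.take e)[η + i]? := by
            rw [getElem?_append, if_pos (by simp; omega)]
          rw [← i1, hE, i2]
        have hsu : SPer (z.take e) σ := by
          rw [hu_x]
          exact hxper.take e
        have hyperσ : SPer y σ := by
          intro i hip
          rw [hrelyu i (by omega), hrelyu (i + σ) hip]
          have := hsu (η + i) (by simp; omega)
          rw [this]
          congr 1
          omega
        have hyperη : SPer y η := by
          intro i hip
          have hif : i < f := by omega
          have e1 : y[i]? = (y.take f)[i]? := by rw [getElem?_take, if_pos hif]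
          have e2 : y.take f = y.drop η := by
            have r1 : (wpow y 3).drop (2 * y.length + η) = y.drop η := by
              rw [← drop_drop, drop_wpow_mul y (show 2 ≤ 3 by omega),
                show (3:ℕ) - 2 = 1 from rfl, wpow_one]
            have r2 : (wpow y 3).drop (2 * y.length + η) = z.drop e := by
              rw [hYb, show 2 * y.length + η = (z.drop e).length + e by simp; omega,
                drop_length_add_append]
            rw [← hgf]
            exact r2.symm.trans r1
          rw [e1, e2, getElem?_drop]
          congr 1
          omega
        have hδ' := finewilf hσ0 hη0 (by omega) hyperσ hyperη
        obtain ⟨δ, hδdef⟩ : ∃ δ, δ = Nat.gcd σ η := ⟨_, rfl⟩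
        have hδσ : δ ∣ σ := hδdef ▸ Nat.gcd_dvd_left _ _
        have hδη : δ ∣ η := hδdef ▸ Nat.gcd_dvd_right _ _
        have hδ0 : 0 < δ := hδdef ▸ Nat.gcd_pos_of_pos_left _ hσ0
        have hδle : δ ≤ σ := Nat.le_of_dvd hσ0 hδσ
        have hmy : MPer y δ := by
          rw [hδdef]
          exact hδ'.mper (hδdef ▸ hδ0)
        have hδy : δ ∣ y.length := by
          rw [show y.length = η + 2 * σ by omega]
          exact dvd_add hδη (Dvd.dvd.mul_left hδσ 2)
        have := hy.period_eq hδ0 hδy hmy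
        omega

theorem main_prim {N : ℕ}
    (IH : ∀ {x' y' z' : List α} {a' b' c' : ℕ}, 2 ≤ a' → 2 ≤ b' → 2 ≤ c' →
      wpow x' a' ++ wpow y' b' = wpow z' c' → c' * z'.length < N →
      ∃ t i j k, x' = wpow t i ∧ y' = wpow t j ∧ z' = wpow t k)
    {x y z : List α} {a b c : ℕ} (hx : Primitive x) (hy : Primitive y) (hz : Primitive z)
    (ha : 2 ≤ a) (hb : 2 ≤ b) (hc : 2 ≤ c)
    (heq : wpow x a ++ wpow y b = wpow z c) (hN : c * z.length ≤ N)
    (hba : b * y.length ≤ a * x.length) : x = y := by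
  rcases le_or_gt (x.length + z.length) (a * x.length) with hcase1 | h1
  · exact case1 hx hy hz ha hb hc heq hcase1
  · rcases le_or_gt (y.length + z.length) (b * y.length) with hcase2 | h2
    · have heqr : wpow y.reverse b ++ wpow x.reverse a = wpow z.reverse c := by
        have h0 := congrArg List.reverse heq
        rw [reverse_append, reverse_wpow, reverse_wpow, reverse_wpow] at h0
        exact h0
      have h3 := case1 hy.reverse hx.reverse hz.reverse hb ha hc heqr (by simpa using hcase2)
      have h4 := congrArg List.reverse h3
      simpa using h4.symm
    · exact (hard_false IH hx hy hz ha hb hc heq hN h1 h2 hba).elim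

theorem lsgen : ∀ (N : ℕ) {x y z : List α} {a b c : ℕ}, 2 ≤ a → 2 ≤ b → 2 ≤ c →
    wpow x a ++ wpow y b = wpow z c → c * z.length ≤ N →
    ∃ t i j k, x = wpow t i ∧ y = wpow t j ∧ z = wpow t k := by
  intro N
  induction N using Nat.strong_induction_on with
  | _ N IHN =>
    intro x y z a b c ha hb hc heq hN
    have IH : ∀ {x' y' z' : List α} {a' b' c' : ℕ}, 2 ≤ a' → 2 ≤ b' → 2 ≤ c' →
        wpow x' a' ++ wpow y' b' = wpow z' c' → c' * z'.length < N →
        ∃ t i j k, x' = wpow t i ∧ y' = wpow t j ∧ z' = wpow t k := by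
      intro x' y' z' a' b' c' ha' hb' hc' heq' hlt
      exact IHN (c' * z'.length) hlt ha' hb' hc' heq' le_rfl
    by_cases hz0 : z = []
    · subst hz0
      have h0 : wpow x a ++ wpow y b = [] := by rw [heq, wpow_nil]
      obtain ⟨ha0, hb0⟩ := append_eq_nil_iff.mp h0
      have hx0 : x = [] := by
        have h1 := congrArg List.length ha0
        rw [length_wpow] at h1
        simp only [List.length_nil] at h1
        rcases Nat.mul_eq_zero.mp h1 with h | h
        · omega
        · exact length_eq_zero_iff.mp h
      have hy0 : y = [] := by
        have h1 := congrArg List.length hb0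
        rw [length_wpow] at h1
        simp only [List.length_nil] at h1
        rcases Nat.mul_eq_zero.mp h1 with h | h
        · omega
        · exact length_eq_zero_iff.mp h
      exact ⟨[], 1, 1, 1, by simp [hx0], by simp [hy0], by simp⟩
    by_cases hx0 : x = []
    · subst hx0
      have heq' : wpow y b = wpow z c := by
        rw [wpow_nil, nil_append] at heq
        exact heq
      obtain ⟨t, i, j, hy', hz'⟩ := pow_pow_common hb hc heq'
      exact ⟨t, 0, i, j, by simp, hy', hz'⟩
    by_cases hy0 : y = []
    · subst hy0
      have heq' : wpow x a = wpow z c := by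
        rw [wpow_nil, append_nil] at heq
        exact heq
      obtain ⟨t, i, j, hx', hz'⟩ := pow_pow_common ha hc heq'
      exact ⟨t, i, 0, j, hx', by simp, hz'⟩
    -- all nonempty: pass to primitive roots
    obtain ⟨px, mx, hpx, hmx, hxe⟩ := exists_prim_root x.length x le_rfl hx0
    obtain ⟨py, my, hpy, hmy, hye⟩ := exists_prim_root y.length y le_rfl hy0
    obtain ⟨pz, mz, hpz, hmz, hze⟩ := exists_prim_root z.length z le_rfl hz0
    have heq2 : wpow px (a * mx) ++ wpow py (b * my) = wpow pz (c * mz) := by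
      rw [← wpow_mul, ← wpow_mul, ← wpow_mul, ← hxe, ← hye, ← hze]
      exact heq
    have hA : 2 ≤ a * mx := by
      have := Nat.mul_le_mul_left a hmx
      omega
    have hB : 2 ≤ b * my := by
      have := Nat.mul_le_mul_left b hmy
      omega
    have hC : 2 ≤ c * mz := by
      have := Nat.mul_le_mul_left c hmz
      omega
    have hzlen : z.length = mz * pz.length := by rw [hze]; simp
    have hN2 : (c * mz) * pz.length ≤ N := by
      have h0 : c * mz * pz.length = c * z.length := by rw [hzlen]; ring
      omega
    have hkey : px = py := by
      rcases le_total (b * my * py.length) (a * mx * px.length) with hba | hab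
      · exact main_prim IH hpx hpy hpz hA hB hC heq2 hN2 hba
      · have heqr : wpow py.reverse (b * my) ++ wpow px.reverse (a * mx)
            = wpow pz.reverse (c * mz) := by
          have h0 := congrArg List.reverse heq2
          rw [reverse_append, reverse_wpow, reverse_wpow, reverse_wpow] at h0
          exact h0
        have h3 := main_prim IH hpy.reverse hpx.reverse hpz.reverse hB hA hC heqr
          (by simpa using hN2) (by simpa using hab)
        have h4 := congrArg List.reverse h3
        simpa using h4.symm
    have hxeq : wpow px (a * mx + b * my) = wpow pz (c * mz) := by
      rw [wpow_add, ← heq2, hkey]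
    have hxz : px = pz := prim_pow_eq hpz hpx (by omega) (by omega) hxeq
    exact ⟨px, mx, my, mz, hxe, by rw [hye, hkey], by rw [hze, hxz]⟩

end WordProof

open WordProof

/-- If `p ≠ q` are primitive words, then `pⁱqʲ` is primitive for all `i, j ≥ 2`. -/
theorem primitive_pow_cat_pow {α : Type*} (p q : List α)
    (hp : Primitive p) (hq : Primitive q) (hne : p ≠ q)
    (i j : ℕ) (hi : 2 ≤ i) (hj : 2 ≤ j) :
    Primitive (wpow p i ++ wpow q j) := by
  have hpl := prim_ne_nil hp
  have hql := prim_ne_nil hq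
  have h2p : 2 * p.length ≤ i * p.length := Nat.mul_le_mul_right _ hi
  constructor
  · intro h0
    have h1 := congrArg List.length h0
    simp only [List.length_append, length_wpow, List.length_nil] at h1
    omega
  · intro v n hv
    by_contra hn1
    have hn0 : n ≠ 0 := by
      rintro rfl
      rw [wpow_zero] at hv
      have h1 := congrArg List.length hv
      simp only [List.length_append, length_wpow, List.length_nil] at h1
      omega
    have hn2 : 2 ≤ n := by omega
    obtain ⟨t, it, jt, kt, hpt, hqt, -⟩ := lsgen (n * v.length) hi hj hn2 hv le_rfl
    have hip := hp.exp_eq hpt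
    have hjq := hq.exp_eq hqt
    apply hne
    rw [hpt, hqt, hip, hjq]
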